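/- (Kramer's sampling theorem.) Let I = [a, b] be a finite real interval and let K : I × ℝ → ℂ be such that K(·, x) ∈ L²(I, dy) for every x ∈ ℝ. Suppose there is a sequence {x_n}_{n ∈ ℤ} of real numbers such that {K(·, x_n)}_{ن ∈ ℤ} is an orthogonal basis of L²(I, dy) (a complete orthogonal system of nonzero elements). Let f(x) := ⟨K(·, x), g(·)⟩_{L²(I)} for some g ∈ L²(I, dy). Then for every x ∈ ℝ: f(x) = Σ_{n ∈ ℤ} ( ⟨K(·, x), K(·, x_n)⟩_{L²(I)} / ‖K(·, x_n)‖²_{L²(I)} ) · f(x_n), the series converging absolutely. -/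

import Mathlib

open scoped ComplexConjugate
open Complex

noncomputable section

variable {H : Type*} [NormedAddCommGroup H] [InnerProductSpace ℂ H] [CompleteSpace H]

local notation "⟪" x ", " y "⟫" => @inner ℂ _ _ x y

/-- The range of `T - z·I`, as a subset of `H`. -/
def ranShift (T : H →ₗ.[ℂ] H) (z : ℂ) : Set H :=
  Set.range fun φ : T.domain => T φ - z • (φ : H)

/-- `ψ` belongs to the kernel of `T - z·I`. -/
def InKerShift (T : H →ₗ.[ℂ] H) (z : ℂ) (ψ : H) : Prop :=
  ∃ h : ψ ∈ T.domain, T ⟨ψ, h⟩ = z • ψ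

/-- `H = ran(A - z·I) ∔ span{μ}` (direct algebraic sum): every vector has a unique
decomposition `v = r + c • μ` with `r ∈ ran(A - z·I)`. -/
def GaugeSplit (A : H →ₗ.[ℂ] H) (μ : H) (z : ℂ) : Prop :=
  ∀ v : H, ∃! c : ℂ, v - c • μ ∈ ranShift A z

/-- The exceptional set `S_μ`. -/
def Smu (A : H →ₗ.[ℂ] H) (μ : H) : Set ℂ := {z | ¬ GaugeSplit A μ z}

/-- `A` is simple: `⋂_{Im z ≠ 0} ran(A - z·I) = {0}`. -/
def IsSimpleOp (A : H →ₗ.[ℂ] H) : Prop :=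
  (⋂ z ∈ {w : ℂ | w.im ≠ 0}, ranShift A z) = ({0} : Set H)

/-- `A` is regular: every `z ∈ ℂ` is a point of regular type, i.e. `A - z·I` has a
bounded inverse on its range. -/
def IsRegularOp (A : H →ₗ.[ℂ] H) : Prop :=
  ∀ z : ℂ, ∃ c : ℝ, 0 < c ∧ ∀ φ : A.domain, c * ‖(φ : H)‖ ≤ ‖A φ - z • (φ : H)‖

/-- `A` has deficiency indices `(1,1)`: for every `z ∈ ℂ`, the kernel of `A* - z·I`
is spanned by a single nonzero vector. -/
def DefIndicesOneOne (A : H →ₗ.[ℂ] H) : Prop :=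
  ∀ z : ℂ, ∃ v : H, v ≠ 0 ∧
    {ψ : H | InKerShift A.adjoint z ψ} = {w : H | ∃ c : ℂ, w = c • v}

/-- `A` is symmetric. -/
def IsSymmetricPOp (A : H →ₗ.[ℂ] H) : Prop :=
  ∀ x y : A.domain, ⟪(A x : H), (y : H)⟫ = ⟪(x : H), (A y : H)⟫

/-- The data of a densely defined, closed, symmetric, simple, regular operator with
deficiency indices (1,1): the setting of Krein's theory. -/
structure KreinOp (H : Type*) [NormedAddCommGroup H] [InnerProductSpace ℂ H]
    [CompleteSpace H] where
  A : H →ₗ.[ℂ] H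
  dense : Dense (A.domain : Set H)
  closed : A.IsClosed
  symm : IsSymmetricPOp A
  simple : IsSimpleOp A
  regular : IsRegularOp A
  defOneOne : DefIndicesOneOne A

/-- `B` is a self-adjoint extension of `A` (within `H`). -/
def IsSAExt (A B : H →ₗ.[ℂ] H) : Prop :=
  A ≤ B ∧ IsSelfAdjoint B

/-- `R z` is, for every `z ∈ res`, the (everywhere defined, bounded) inverse of `B - z·I`;
in particular `res ⊆ ℂ ∖ Sp(B)`. -/
def IsResolventOn (B : H →ₗ.[ℂ] H) (res : Set ℂ) (R : ℂ → H →L[ℂ] H) : Prop :=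
  ∀ z ∈ res, (∀ v : H, ∃ h : R z v ∈ B.domain, B ⟨R z v, h⟩ - z • R z v = v)
    ∧ ∀ φ : B.domain, R z ((B φ : H) - z • (φ : H)) = (φ : H)

/-- `ψ(z) = ψ₀ + (z - z₀)(B - z·I)⁻¹ ψ₀`. -/
def psiFun (R : ℂ → H →L[ℂ] H) (z₀ : ℂ) (ψ₀ : H) (z : ℂ) : H :=
  ψ₀ + (z - z₀) • R z ψ₀

/-- `ξ(z) = ψ(z̄) / ⟪μ, ψ(z̄)⟫`. -/
def xiFun (μ : H) (R : ℂ → H →L[ℂ] H) (z₀ : ℂ) (ψ₀ : H) (z : ℂ) : H :=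
  (⟪μ, psiFun R z₀ ψ₀ (conj z)⟫)⁻¹ • psiFun R z₀ ψ₀ (conj z)

/-- `P` is the orthogonal projection onto `Ker(B - x·I)`. -/
def IsEigenProjection (B : H →ₗ.[ℂ] H) (x : ℝ) (P : H →L[ℂ] H) : Prop :=
  IsSelfAdjoint P ∧ (∀ v : H, P (P v) = P v) ∧ ∀ v : H, (P v = v ↔ InKerShift B (x : ℂ) v)


open MeasureTheory in
/-- **Kramer's sampling theorem.** Let `I = [a,b]` be a finite interval and
`K(·,x) ∈ L²(I, dy)` for every `x ∈ ℝ`. If `{K(·, x n)}_{n ∈ ℤ}` is a complete orthogonal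
system of nonzero elements of `L²(I, dy)`, then every `f(x) = ⟪K(·,x), g⟫` with
`g ∈ L²(I, dy)` satisfies, for every `x ∈ ℝ`,
`f(x) = Σ_n (⟪K(·,x), K(·,x n)⟫ / ‖K(·,x n)‖²) f(x n)`, the series converging absolutely. -/
theorem statement19 (a b : ℝ) (hab : a ≤ b)
    (K : ℝ → Lp ℂ 2 (volume.restrict (Set.Icc a b)))
    (x : ℤ → ℝ)
    (horth : ∀ m n : ℤ, m ≠ n → ⟪K (x m), K (x n)⟫ = 0)
    (hne : ∀ n : ℤ, K (x n) ≠ 0)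
    (hcomplete : ∀ v : Lp ℂ 2 (volume.restrict (Set.Icc a b)),
      (∀ n : ℤ, ⟪K (x n), v⟫ = 0) → v = 0)
    (g : Lp ℂ 2 (volume.restrict (Set.Icc a b)))
    (t : ℝ) :
    HasSum
      (fun n : ℤ =>
        (⟪K t, K (x n)⟫ / ((‖K (x n)‖ : ℂ) ^ 2)) * ⟪K (x n), g⟫)
      ⟪K t, g⟫
    ∧ Summable (fun n : ℤ =>
        ‖(⟪K t, K (x n)⟫ / ((‖K (x n)‖ : ℂ) ^ 2)) * ⟪K (x n), g⟫‖) := by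

  set e : ℤ → Lp ℂ 2 (volume.restrict (Set.Icc a b)) :=
    fun n => ((‖K (x n)‖ : ℂ))⁻¹ • K (x n) with he
  have hcn : ∀ n, (‖K (x n)‖ : ℂ) ≠ 0 := fun n =>
    Complex.ofReal_ne_zero.mpr (norm_ne_zero_iff.mpr (hne n))
  have hon : Orthonormal ℂ e := by
    rw [orthonormal_iff_ite]
    intro m n
    by_cases h : m = n
    · subst h
      simp only [he, inner_smul_left, inner_smul_right, if_pos rfl,
        inner_self_eq_norm_sq_to_K, map_inv₀, Complex.conj_ofReal]
      field_simp
      rw [if_pos trivial]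
      rw [norm_smul]
      simp [norm_inv, hne m]
    · simp [he, inner_smul_left, inner_smul_right, if_neg h, horth m n h]
  have hsp : (Submodule.span ℂ (Set.range e))ᗮ = ⊥ := by
    rw [Submodule.eq_bot_iff]
    intro u hu
    refine hcomplete u fun n => ?_
    have hmem : e n ∈ Submodule.span ℂ (Set.range e) :=
      Submodule.subset_span ⟨n, rfl⟩
    have h0 : ⟪e n, u⟫ = 0 := (Submodule.mem_orthogonal _ u).mp hu _ hmem
    rw [he] at h0
    simp only [inner_smul_left, map_inv₀, Complex.conj_ofReal, mul_eq_zero,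
      inv_eq_zero] at h0
    exact h0.resolve_left (hcn n)
  let β : HilbertBasis ℤ ℂ _ := HilbertBasis.mkOfOrthogonalEqBot hon hsp
  have hb : ⇑β = e := HilbertBasis.coe_mkOfOrthogonalEqBot hon hsp
  have hfun : (fun n : ℤ =>
        (⟪K t, K (x n)⟫ / ((‖K (x n)‖ : ℂ) ^ 2)) * ⟪K (x n), g⟫)
      = fun n : ℤ => ⟪K t, β n⟫ * ⟪β n, g⟫ := by
    funext n
    rw [hb, he]
    rw [inner_smul_left, inner_smul_right, map_inv₀, Complex.conj_ofReal,
      div_eq_mul_inv, pow_two, mul_inv]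
    ring
  have hsum : HasSum (fun n : ℤ =>
      (⟪K t, K (x n)⟫ / ((‖K (x n)‖ : ℂ) ^ 2)) * ⟪K (x n), g⟫) ⟪K t, g⟫ := by
    rw [hfun]; exact β.hasSum_inner_mul_inner (K t) g
  refine ⟨hsum, ?_⟩
  -- absolute summability
  have hsq : ∀ v : Lp ℂ 2 (volume.restrict (Set.Icc a b)),
      Summable fun n : ℤ => ‖(⟪β n, v⟫ : ℂ)‖ ^ 2 := by
    intro v
    have h1 : Memℓp (⇑(β.repr v)) 2 := lp.memℓp (β.repr v)
    have h2 := (memℓp_gen_iff (by norm_num : (0:ℝ) < (2 : ENNReal).toReal)).mp h1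
    exact h2.congr fun n => by
      rw [β.repr_apply_apply, show (2:ENNReal).toReal = ((2:ℕ):ℝ) by norm_num,
        Real.rpow_natCast]
  have hpq : Summable fun n : ℤ => ‖(⟪K t, β n⟫ : ℂ)‖ * ‖(⟪β n, g⟫ : ℂ)‖ := by
    refine Summable.of_nonneg_of_le (fun n => by positivity)
      (fun n => ?_) (((hsq (K t)).add (hsq g)).div_const 2)
    have h2 := two_mul_le_add_sq ‖(⟪β n, K t⟫ : ℂ)‖ ‖(⟪β n, g⟫ : ℂ)‖
    rw [← norm_inner_symm]
    nlinarith [norm_nonneg (⟪β n, K t⟫ : ℂ), norm_nonneg (⟪β n, g⟫ : ℂ)]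
  refine hpq.congr fun n => ?_
  rw [← norm_mul]
  exact (congrArg norm (congrFun hfun n)).symm

end
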